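/- Let A, B be strings of lengths m and n, σ a character, K' the all scores matrix of σA and B, and Diff = K' − K. Assume every row of K□ contains at most one nonzero entry and every nonzero entry of K□ equals 1. Then for all 0 ≤ i ≤ j ≤ n: Diff[i,j] = 1 if and only if k = nextmatch(i,σ,B) < ∞ and, for every row index i' with i+1 ≤ i' ≤ k, there exists a column index j' with 1 ≤ j' ≤ j such that K□[i',j'] ≠ 0 (i.e., every row of the submatrix of K□ with rows i+1,…,k and columns 1,…,j contains exactly one pivotal point). -/

import Mathlib

variable {α : Type*}

/-- LCS of two lists: the maximum length of a common sublist. -/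
noncomputable def LCS (X Y : List α) : ℕ :=
  sSup {k | ∃ Z : List α, Z.length = k ∧ Z.Sublist X ∧ Z.Sublist Y}

/-- `substr S i j` is S[i..j]: the characters of S at (1-based) positions i+1,…,j. -/
def substr (S : List α) (i j : ℕ) : List α := (S.take j).drop i

/-- The density matrix D□ of a matrix D. -/
def density (D : ℕ → ℕ → ℤ) (i j : ℕ) : ℤ :=
  D i j + D (i - 1) (j - 1) - D (i - 1) j - D i (j - 1)

/-- The all scores matrix K of A and B: K[i,j] = LCS(B[i..j], A) if i ≤ j, else j - i. -/
noncomputable def Kmat (A B : List α) (i j : ℕ) : ℤ :=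
  if i ≤ j then (LCS (substr B i j) A : ℤ) else (j : ℤ) - (i : ℤ)

/-- The all scores matrix P of A and B: P[i,j] = LCS(B[i..n], A[0..j]). -/
noncomputable def Pmat (A B : List α) (i j : ℕ) : ℤ :=
  (LCS (substr B i B.length) (substr A 0 j) : ℤ)

/-- nextmatch(i,σ,B): minimum (1-based) position i' with i < i' ≤ |B| and B[i'] = σ; ⊤ (∞) if none. -/
noncomputable def nextmatch (i : ℕ) (σ : α) (B : List α) : ℕ∞ :=
  sInf {k : ℕ∞ | ∃ k' : ℕ, k = (k' : ℕ∞) ∧ i < k' ∧ k' ≤ B.length ∧ B[k' - 1]? = some σ}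

/-- prevmatch(j,σ,B): maximum (1-based) position i' with 1 ≤ i' ≤ j and B[i'] = σ; ⊥ (−∞) if none. -/
noncomputable def prevmatch (j : ℕ) (σ : α) (B : List α) : WithBot ℕ :=
  sSup {k : WithBot ℕ | ∃ k' : ℕ, k = (k' : WithBot ℕ) ∧ 1 ≤ k' ∧ k' ≤ j ∧ B[k' - 1]? = some σ}

open scoped Classical

/-! ### Basic facts about `LCS` -/

lemma lcs_nonempty (X Y : List α) :
    {k | ∃ Z : List α, Z.length = k ∧ Z.Sublist X ∧ Z.Sublist Y}.Nonempty :=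
  ⟨0, [], rfl, List.nil_sublist _, List.nil_sublist _⟩

lemma lcs_bdd (X Y : List α) :
    BddAbove {k | ∃ Z : List α, Z.length = k ∧ Z.Sublist X ∧ Z.Sublist Y} := by
  refine ⟨X.length, fun k hk => ?_⟩
  obtain ⟨Z, hZ, hZX, _⟩ := hk
  exact hZ ▸ hZX.length_le

lemma exists_lcs (X Y : List α) :
    ∃ Z : List α, Z.length = LCS X Y ∧ Z.Sublist X ∧ Z.Sublist Y :=
  Nat.sSup_mem (lcs_nonempty X Y) (lcs_bdd X Y)

lemma le_lcs {Z X Y : List α} (hX : Z.Sublist X) (hY : Z.Sublist Y) :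
    Z.length ≤ LCS X Y :=
  le_csSup (lcs_bdd X Y) ⟨Z, rfl, hX, hY⟩

lemma lcs_mono_left {X X' : List α} (Y : List α) (h : X.Sublist X') :
    LCS X Y ≤ LCS X' Y := by
  obtain ⟨Z, hl, hX, hY⟩ := exists_lcs X Y
  exact hl ▸ le_lcs (hX.trans h) hY

lemma lcs_cons_le (X A : List α) (σ : α) : LCS X (σ :: A) ≤ LCS X A + 1 := by
  obtain ⟨Z, hl, hX, hY⟩ := exists_lcs X (σ :: A)
  rcases (List.sublist_cons_iff).mp hY with h | ⟨Z', rfl, hZ'⟩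
  · exact hl ▸ (le_lcs hX h).trans (Nat.le_succ _)
  · have : Z'.length ≤ LCS X A :=
      le_lcs ((List.sublist_cons_self σ Z').trans hX) hZ'
    simp only [List.length_cons] at hl; omega

lemma lcs_nil (Y : List α) : LCS ([] : List α) Y = 0 := by
  obtain ⟨Z, hl, hX, _⟩ := exists_lcs ([] : List α) Y
  simpa [List.sublist_nil.mp hX] using hl.symm

lemma lcs_cons_not_mem {X A : List α} {σ : α} (h : σ ∉ X) :
    LCS X (σ :: A) = LCS X A := by
  refine le_antisymm ?_ ?_
  · obtain ⟨Z, hl, hX, hY⟩ := exists_lcs X (σ :: A)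
    rcases (List.sublist_cons_iff).mp hY with h' | ⟨Z', rfl, hZ'⟩
    · exact hl ▸ le_lcs hX h'
    · exact absurd (hX.mem List.mem_cons_self) h
  · obtain ⟨Z, hl, hX, hY⟩ := exists_lcs X A
    exact hl ▸ le_lcs hX (hY.trans (List.sublist_cons_self σ A))

/-! ### Lists and substrings -/

lemma first_occ {σ : α} : ∀ (P : List α) {Z' S : List α}, σ ∉ P →
    (σ :: Z').Sublist (P ++ σ :: S) → Z'.Sublist S := by
  intro P
  induction P with
  | nil => intro Z' S _ h; simpa using h
  | cons p P ih =>
    intro Z' S hmem h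
    rcases List.cons_sublist_cons'.mp (by simpa using h) with h' | ⟨h1, h2⟩
    · exact ih (fun hc => hmem (List.mem_cons_of_mem p hc)) h'
    · exact (hmem (by rw [h1]; exact List.mem_cons_self)).elim

lemma substr_append {B : List α} {i a j : ℕ} (h1 : i ≤ a) (h2 : a ≤ j)
    (h3 : a ≤ B.length) : substr B i j = substr B i a ++ substr B a j := by
  unfold substr
  have ht : B.take j = B.take a ++ (B.take j).drop a := by
    conv_lhs => rw [← List.take_append_drop a (B.take j)]
    rw [List.take_take, min_eq_left h2]
  conv_lhs => rw [ht]
  rw [List.drop_append]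
  have hla : (B.take a).length = a := List.length_take_of_le h3
  rw [hla, Nat.sub_eq_zero_of_le h1, List.drop_zero]

lemma substr_cons {B : List α} {k j : ℕ} (h0 : 1 ≤ k) (h1 : k ≤ j)
    (h2 : k ≤ B.length) {x : α} (hx : B[k-1]? = some x) :
    substr B (k-1) j = x :: substr B k j := by
  unfold substr
  have hlt : k - 1 < (B.take j).length := by
    rw [List.length_take]; omega
  rw [List.drop_eq_getElem_cons hlt]
  have : (B.take j)[k-1] = B[k-1]'(by omega) := List.getElem_take
  have hx' : B[k-1]'(by omega) = x := by
    rwa [List.getElem?_eq_getElem (by omega), Option.some_inj] at hx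
  rw [this, hx', show k - 1 + 1 = k by omega]

lemma mem_substr {B : List α} {i j : ℕ} {x : α} (h : x ∈ substr B i j) :
    ∃ p, i ≤ p ∧ p < j ∧ p < B.length ∧ B[p]? = some x := by
  unfold substr at h
  obtain ⟨q, hq, hqe⟩ := List.mem_iff_getElem.mp h
  have hlen : (List.drop i (List.take j B)).length = min j B.length - i := by
    simp [List.length_drop, List.length_take]
  rw [List.getElem_drop, List.getElem_take] at hqe
  refine ⟨i + q, Nat.le_add_right _ _, ?_, ?_, ?_⟩
  · omega
  · omega
  · rw [List.getElem?_eq_getElem (by omega)]; exact congrArg some hqe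

lemma substr_self (B : List α) (a : ℕ) : substr B a a = [] :=
  List.drop_eq_nil_of_le (by simp [List.length_take])

lemma substr_sublist (B : List α) {i k j : ℕ} (h : i ≤ k) :
    (substr B k j).Sublist (substr B i j) := by
  have heq : substr B k j = List.drop (k-i) (substr B i j) := by
    unfold substr
    rw [List.drop_drop, show i + (k - i) = k by omega]
  rw [heq]
  exact List.drop_sublist _ _

/-! ### The matrix `Kmat` and densities -/

lemma Kmat_zero (A B : List α) (i : ℕ) : Kmat A B i 0 = -(i : ℤ) := by
  unfold Kmat
  split
  · have : i = 0 := by omega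
    subst this
    simp [substr_self, lcs_nil]
  · simp

lemma density_below (A B : List α) {i' j' : ℕ} (h1 : 1 ≤ j') (h2 : j' < i') :
    density (Kmat A B) i' j' = 0 := by
  have e1 : Kmat A B i' j' = (j' : ℤ) - (i' : ℤ) := by
    unfold Kmat; rw [if_neg (by omega)]
  have e2 : Kmat A B (i'-1) (j'-1) = ((j'-1 : ℕ) : ℤ) - ((i'-1 : ℕ) : ℤ) := by
    unfold Kmat; rw [if_neg (by omega)]
  have e4 : Kmat A B i' (j'-1) = ((j'-1 : ℕ) : ℤ) - (i' : ℤ) := by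
    unfold Kmat; rw [if_neg (by omega)]
  by_cases hc : i' = j' + 1
  · have e3 : Kmat A B (i'-1) j' = 0 := by
      unfold Kmat
      rw [if_pos (by omega), show i' - 1 = j' by omega, substr_self, lcs_nil]
      simp
    unfold density; rw [e1, e2, e3, e4]
    rw [show i' - 1 = j' by omega]
    omega
  · have e3 : Kmat A B (i'-1) j' = (j' : ℤ) - ((i'-1 : ℕ) : ℤ) := by
      unfold Kmat; rw [if_neg (by omega)]
    unfold density; rw [e1, e2, e3, e4]
    omega

section

variable (A B : List α) (n : ℕ)
  (hRow : ∀ i, 1 ≤ i → i ≤ n → ∀ j₁ j₂, 1 ≤ j₁ → j₁ ≤ n → 1 ≤ j₂ → j₂ ≤ n →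
      density (Kmat A B) i j₁ ≠ 0 → density (Kmat A B) i j₂ ≠ 0 → j₁ = j₂)
  (hVal : ∀ i, 1 ≤ i → i ≤ n → ∀ j, 1 ≤ j → j ≤ n →
      density (Kmat A B) i j ≠ 0 → density (Kmat A B) i j = 1)

include hRow hVal

lemma rowdiff (i' : ℕ) (h1 : 1 ≤ i') (h2 : i' ≤ n) :
    ∀ j, j ≤ n → Kmat A B (i'-1) j - Kmat A B i' j =
      (if ∃ j', 1 ≤ j' ∧ j' ≤ j ∧ density (Kmat A B) i' j' ≠ 0 then 0 else 1) := by
  intro j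
  induction j with
  | zero =>
    intro _
    rw [if_neg (by rintro ⟨j', hj1, hj2, _⟩; omega), Kmat_zero, Kmat_zero]
    omega
  | succ j ih =>
    intro hj
    have hd : Kmat A B (i'-1) (j+1) - Kmat A B i' (j+1) =
        (Kmat A B (i'-1) j - Kmat A B i' j) - density (Kmat A B) i' (j+1) := by
      simp only [density, Nat.add_sub_cancel]; ring
    by_cases hz : density (Kmat A B) i' (j+1) = 0
    · rw [hd, hz, sub_zero, ih (by omega)]
      have hiff : (∃ j', 1 ≤ j' ∧ j' ≤ j ∧ density (Kmat A B) i' j' ≠ 0) ↔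
          (∃ j', 1 ≤ j' ∧ j' ≤ j + 1 ∧ density (Kmat A B) i' j' ≠ 0) := by
        constructor
        · rintro ⟨j', a, b, c⟩; exact ⟨j', a, by omega, c⟩
        · rintro ⟨j', a, b, c⟩
          refine ⟨j', a, ?_, c⟩
          rcases Nat.lt_or_ge j' (j+1) with h | h
          · omega
          · exact absurd (by rwa [show j' = j + 1 by omega] at c) (not_not.mpr hz)
      rw [if_congr hiff rfl rfl]
    · have hval1 := hVal i' h1 h2 (j+1) (by omega) (by omega) hz
      have hcondj : ¬ (∃ j', 1 ≤ j' ∧ j' ≤ j ∧ density (Kmat A B) i' j' ≠ 0) := by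
        rintro ⟨j', a, b, c⟩
        have := hRow i' h1 h2 j' (j+1) a (by omega) (by omega) (by omega) c hz
        omega
      rw [hd, ih (by omega), if_neg hcondj,
        if_pos ⟨j+1, by omega, le_refl _, hz⟩, hval1]
      ring

lemma Kmono (i j : ℕ) (hj : j ≤ n) :
    ∀ k, i ≤ k → k ≤ n → Kmat A B k j ≤ Kmat A B i j := by
  intro k hik
  induction k, hik using Nat.le_induction with
  | base => intro _; exact le_refl _
  | succ k hk ih =>
    intro hkn
    have hd := rowdiff A B n hRow hVal (k+1) (by omega) hkn j hj
    rw [Nat.add_sub_cancel] at hd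
    have h0 : (0:ℤ) ≤ (if ∃ j', 1 ≤ j' ∧ j' ≤ j ∧ density (Kmat A B) (k+1) j' ≠ 0
        then 0 else 1) := by split <;> norm_num
    have := ih (by omega)
    omega

lemma tele (i j : ℕ) (hj : j ≤ n) :
    ∀ k, i ≤ k → k ≤ n →
      (Kmat A B i j = Kmat A B k j ↔
        ∀ i', i + 1 ≤ i' → i' ≤ k →
          ∃ j', 1 ≤ j' ∧ j' ≤ j ∧ density (Kmat A B) i' j' ≠ 0) := by
  intro k hik
  induction k, hik using Nat.le_induction with
  | base =>
    intro _
    constructor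
    · intro _ i' h1 h2; exact absurd (h1.trans h2) (by omega)
    · intro _; rfl
  | succ k hk ih =>
    intro hkn
    have hd := rowdiff A B n hRow hVal (k+1) (by omega) hkn j hj
    rw [Nat.add_sub_cancel] at hd
    have hmono1 := Kmono A B n hRow hVal i j hj k hk (by omega)
    constructor
    · intro heq
      have h0 : (0:ℤ) ≤ (if ∃ j', 1 ≤ j' ∧ j' ≤ j ∧ density (Kmat A B) (k+1) j' ≠ 0
          then 0 else 1) := by split <;> norm_num
      have heq1 : Kmat A B i j = Kmat A B k j := by omega
      have heq2 : Kmat A B k j = Kmat A B (k+1) j := by omega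
      have hcond : ∃ j', 1 ≤ j' ∧ j' ≤ j ∧ density (Kmat A B) (k+1) j' ≠ 0 := by
        by_contra hc
        rw [if_neg hc] at hd
        omega
      intro i' h1 h2
      rcases Nat.lt_or_ge i' (k+1) with h | h
      · exact (ih (by omega)).mp heq1 i' h1 (by omega)
      · rw [show i' = k + 1 by omega]; exact hcond
    · intro hrows
      have heq1 : Kmat A B i j = Kmat A B k j :=
        (ih (by omega)).mpr (fun i' a b => hrows i' a (by omega))
      have hcond := hrows (k+1) (by omega) (le_refl _)
      rw [if_pos hcond] at hd
      omega

end

/-! ### nextmatch -/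

lemma nm_eq (i : ℕ) (σ : α) (B : List α) (k : ℕ)
    (hk : i < k ∧ k ≤ B.length ∧ B[k-1]? = some σ)
    (hmin : ∀ k', i < k' → k' ≤ B.length → B[k'-1]? = some σ → k ≤ k') :
    nextmatch i σ B = (k : ℕ∞) := by
  refine le_antisymm (sInf_le ⟨k, rfl, hk⟩) (le_sInf ?_)
  rintro b ⟨k', rfl, h1, h2, h3⟩
  exact_mod_cast hmin k' h1 h2 h3

lemma nm_spec {i : ℕ} {σ : α} {B : List α} {k : ℕ}
    (h : nextmatch i σ B = (k : ℕ∞)) :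
    (i < k ∧ k ≤ B.length ∧ B[k-1]? = some σ) ∧
      ∀ k', i < k' → k' ≤ B.length → B[k'-1]? = some σ → k ≤ k' := by
  set S : Set ℕ∞ := {k : ℕ∞ | ∃ k' : ℕ, k = (k' : ℕ∞) ∧ i < k' ∧ k' ≤ B.length ∧ B[k' - 1]? = some σ} with hS
  set T : Set ℕ := {k' : ℕ | i < k' ∧ k' ≤ B.length ∧ B[k'-1]? = some σ} with hT
  have hSne : S.Nonempty := by
    by_contra hc
    rw [Set.not_nonempty_iff_eq_empty] at hc
    rw [nextmatch] at h
    rw [show {k : ℕ∞ | ∃ k' : ℕ, k = (k' : ℕ∞) ∧ i < k' ∧ k' ≤ B.length ∧ B[k' - 1]? = some σ} = S from rfl, hc, sInf_empty] at h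
    exact absurd h (by simp)
  obtain ⟨b, k0, rfl, hb1, hb2, hb3⟩ := hSne
  have hTne : T.Nonempty := ⟨k0, hb1, hb2, hb3⟩
  have hmem := Nat.sInf_mem hTne
  have heq : nextmatch i σ B = ((sInf T : ℕ) : ℕ∞) := by
    refine le_antisymm (sInf_le ⟨sInf T, rfl, hmem⟩) (le_sInf ?_)
    rintro b ⟨k', rfl, h1, h2, h3⟩
    exact_mod_cast Nat.sInf_le (show k' ∈ T from ⟨h1, h2, h3⟩)
  rw [h] at heq
  have hkT : k = sInf T := by exact_mod_cast heq
  subst hkT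
  exact ⟨hmem, fun k' a b c => Nat.sInf_le ⟨a, b, c⟩⟩

theorem stmt_6 {α : Type*} (A B : List α) (m n : ℕ)
    (hA : A.length = m) (hB : B.length = n) (σ : α)
    (hRow : ∀ i, 1 ≤ i → i ≤ n → ∀ j₁ j₂, 1 ≤ j₁ → j₁ ≤ n → 1 ≤ j₂ → j₂ ≤ n →
      density (Kmat A B) i j₁ ≠ 0 → density (Kmat A B) i j₂ ≠ 0 → j₁ = j₂)
    (hVal : ∀ i, 1 ≤ i → i ≤ n → ∀ j, 1 ≤ j → j ≤ n →
      density (Kmat A B) i j ≠ 0 → density (Kmat A B) i j = 1) :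
    ∀ i j : ℕ, i ≤ j → j ≤ n →
      (Kmat (σ :: A) B i j - Kmat A B i j = 1 ↔
        ∃ k : ℕ, nextmatch i σ B = (k : ℕ∞) ∧
          ∀ i', i + 1 ≤ i' → i' ≤ k →
            ∃ j', 1 ≤ j' ∧ j' ≤ j ∧ density (Kmat A B) i' j' ≠ 0) := by
  subst hB
  intro i j hij hjn
  set X := substr B i j with hX
  have hK1 : Kmat (σ :: A) B i j = (LCS X (σ :: A) : ℤ) := by
    unfold Kmat; rw [if_pos hij]
  have hK2 : Kmat A B i j = (LCS X A : ℤ) := by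
    unfold Kmat; rw [if_pos hij]
  constructor
  · -- forward direction
    intro hdiff
    rw [hK1, hK2] at hdiff
    have hLL : LCS X (σ :: A) = LCS X A + 1 := by omega
    have hmemσ : σ ∈ X := by
      by_contra hc
      rw [lcs_cons_not_mem hc] at hLL
      omega
    obtain ⟨p, hp1, hp2, hp3, hp4⟩ := mem_substr hmemσ
    set T : Set ℕ := {k' : ℕ | i < k' ∧ k' ≤ B.length ∧ B[k'-1]? = some σ} with hT
    have hpT : p + 1 ∈ T := ⟨by omega, by omega, by simpa using hp4⟩
    have hTne : T.Nonempty := ⟨p + 1, hpT⟩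
    set k := sInf T with hk
    have hkT : k ∈ T := Nat.sInf_mem hTne
    obtain ⟨hk1, hk2, hk3⟩ := hkT
    have hkp : k ≤ p + 1 := Nat.sInf_le hpT
    have hkj : k ≤ j := by omega
    have hknotin : σ ∉ substr B i (k-1) := by
      intro hc
      obtain ⟨q, hq1, hq2, hq3, hq4⟩ := mem_substr hc
      have : k ≤ q + 1 := Nat.sInf_le ⟨by omega, by omega, by simpa using hq4⟩
      omega
    have hdecomp : X = substr B i (k-1) ++ (σ :: substr B k j) := by
      rw [hX, substr_append (show i ≤ k-1 by omega) (show k-1 ≤ j by omega)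
        (show k-1 ≤ B.length by omega), substr_cons (by omega) hkj hk2 hk3]
    obtain ⟨Z, hlZ, hZX, hZY⟩ := exists_lcs X (σ :: A)
    rcases (List.sublist_cons_iff).mp hZY with hZA | ⟨Z', rfl, hZ'A⟩
    · have := le_lcs hZX hZA
      omega
    · have hZ'X : Z'.Sublist (substr B k j) :=
        first_occ _ hknotin (hdecomp ▸ hZX)
      have hge : LCS X A ≤ LCS (substr B k j) A := by
        have := le_lcs hZ'X hZ'A
        simp only [List.length_cons] at hlZ
        omega
      have hle : LCS (substr B k j) A ≤ LCS X A :=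
        lcs_mono_left A (substr_sublist B (show i ≤ k by omega))
      have hKeq : Kmat A B i j = Kmat A B k j := by
        unfold Kmat
        rw [if_pos hij, if_pos hkj]
        exact_mod_cast le_antisymm hge hle
      refine ⟨k, nm_eq i σ B k ⟨hk1, hk2, hk3⟩
        (fun k' a b c => Nat.sInf_le ⟨a, b, c⟩), ?_⟩
      exact (tele A B B.length hRow hVal i j hjn k (by omega) hk2).mp hKeq
  · -- backward direction
    rintro ⟨k, hnm, hrows⟩
    obtain ⟨⟨hk1, hk2, hk3⟩, hmin⟩ := nm_spec hnm
    have hkj : k ≤ j := by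
      by_contra hc
      obtain ⟨j', hj1, hj2, hj3⟩ := hrows k (by omega) (le_refl k)
      exact hj3 (density_below A B hj1 (by omega))
    have hKeq : Kmat A B i j = Kmat A B k j :=
      (tele A B B.length hRow hVal i j hjn k (by omega) hk2).mpr hrows
    have hLeq : LCS X A = LCS (substr B k j) A := by
      unfold Kmat at hKeq
      rw [if_pos hij, if_pos hkj] at hKeq
      exact_mod_cast hKeq
    have hknotin : σ ∉ substr B i (k-1) := by
      intro hc
      obtain ⟨q, hq1, hq2, hq3, hq4⟩ := mem_substr hc
      have : k ≤ q + 1 := hmin (q+1) (by omega) (by omega) (by simpa using hq4)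
      omega
    have hdecomp : X = substr B i (k-1) ++ (σ :: substr B k j) := by
      rw [hX, substr_append (show i ≤ k-1 by omega) (show k-1 ≤ j by omega)
        (show k-1 ≤ B.length by omega), substr_cons (by omega) hkj hk2 hk3]
    obtain ⟨Z', hlZ', hZ'1, hZ'2⟩ := exists_lcs (substr B k j) A
    have hsub1 : (σ :: Z').Sublist X := by
      rw [hdecomp]
      exact (List.cons_sublist_cons.mpr hZ'1).trans (List.sublist_append_right _ _)
    have hsub2 : (σ :: Z').Sublist (σ :: A) := List.cons_sublist_cons.mpr hZ'2
    have hge : LCS (substr B k j) A + 1 ≤ LCS X (σ :: A) := by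
      have := le_lcs hsub1 hsub2
      simp only [List.length_cons] at this
      omega
    have hle := lcs_cons_le X A σ
    rw [hK1, hK2]
    omega
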